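/- With σ₁, σ₂ nonzero real constants, the function Z⁽¹⁾(i)(x₁,x₂) = −(1/σ₁)e^{σ₂x₂} sinh(σ₁x₁) + (i/σ₂)e^{σ₁x₁} sinh(σ₂x₂) is a solution of the Vekua equation ∂_ζ̄ W − (σ₂ − iσ₁)·conj(W) = 0 with ∂_ζ̄ = ∂/∂x₂ + i∂/∂x₁, vanishes at the origin, and satisfies Z⁽¹⁾(i)(x₁,x₂)/(x₂ + ix₁) → i as (x₁,x₂) → (0,0). -/

import Mathlib

/-- `∂_ζ̄ = ∂/∂x₂ + i ∂/∂x₁`, for `ζ = x₂ + i x₁`. -/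
noncomputable def dzetabar (F : ℝ → ℝ → ℂ) (x₁ x₂ : ℝ) : ℂ :=
  deriv (fun t => F x₁ t) x₂ + Complex.I * deriv (fun t => F t x₂) x₁

set_option maxHeartbeats 2000000 in
/-- The first formal power `Z⁽¹⁾(i)` solves the Vekua equation
`∂_ζ̄ W − (σ₂ − iσ₁) conj W = 0`, vanishes at the origin, and satisfies
`Z⁽¹⁾(i)(x₁,x₂)/(x₂ + ix₁) → i` as `(x₁,x₂) → (0,0)`. -/
theorem formal_power_degree_one_coefficient_i
    (σ₁ σ₂ : ℝ) (hσ₁ : σ₁ ≠ 0) (hσ₂ : σ₂ ≠ 0)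
    (Z : ℝ → ℝ → ℂ)
    (hZ : Z = fun x₁ x₂ =>
      ((-(1 / σ₁) * Real.exp (σ₂ * x₂) * Real.sinh (σ₁ * x₁) : ℝ) : ℂ)
        + Complex.I * ((1 / σ₂ * Real.exp (σ₁ * x₁) * Real.sinh (σ₂ * x₂) : ℝ) : ℂ)) :
    (∀ x₁ x₂, dzetabar Z x₁ x₂
        - ((σ₂ : ℂ) - Complex.I * (σ₁ : ℂ)) * (starRingEnd ℂ) (Z x₁ x₂) = 0) ∧
    Z 0 0 = 0 ∧
    Filter.Tendsto (fun q : ℝ × ℝ => Z q.1 q.2 / ((q.2 : ℂ) + Complex.I * (q.1 : ℂ)))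
      (nhdsWithin ((0, 0) : ℝ × ℝ) {((0, 0) : ℝ × ℝ)}ᶜ) (nhds Complex.I) := by
  subst hZ
  refine ⟨?_, by simp, ?_⟩
  · intro x₁ x₂
    have hd2 : HasDerivAt
        (fun t : ℝ => ((-(1 / σ₁) * Real.exp (σ₂ * t) * Real.sinh (σ₁ * x₁) : ℝ) : ℂ)
          + Complex.I * ((1 / σ₂ * Real.exp (σ₁ * x₁) * Real.sinh (σ₂ * t) : ℝ) : ℂ))
        (((-(1 / σ₁) * (Real.exp (σ₂ * x₂) * (σ₂ * 1)) * Real.sinh (σ₁ * x₁) : ℝ) : ℂ)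
          + Complex.I * ((1 / σ₂ * Real.exp (σ₁ * x₁) * (Real.cosh (σ₂ * x₂) * (σ₂ * 1)) : ℝ) : ℂ)) x₂ := by
      have h1 : HasDerivAt (fun t : ℝ => σ₂ * t) (σ₂ * 1) x₂ := (hasDerivAt_id x₂).const_mul σ₂
      have hu : HasDerivAt
          (fun t : ℝ => -(1 / σ₁) * Real.exp (σ₂ * t) * Real.sinh (σ₁ * x₁))
          (-(1 / σ₁) * (Real.exp (σ₂ * x₂) * (σ₂ * 1)) * Real.sinh (σ₁ * x₁)) x₂ :=
        (h1.exp.const_mul (-(1 / σ₁))).mul_const _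
      have hv : HasDerivAt
          (fun t : ℝ => 1 / σ₂ * Real.exp (σ₁ * x₁) * Real.sinh (σ₂ * t))
          (1 / σ₂ * Real.exp (σ₁ * x₁) * (Real.cosh (σ₂ * x₂) * (σ₂ * 1))) x₂ :=
        h1.sinh.const_mul _
      exact hu.ofReal_comp.add (hv.ofReal_comp.const_mul Complex.I)
    have hd1 : HasDerivAt
        (fun t : ℝ => ((-(1 / σ₁) * Real.exp (σ₂ * x₂) * Real.sinh (σ₁ * t) : ℝ) : ℂ)
          + Complex.I * ((1 / σ₂ * Real.exp (σ₁ * t) * Real.sinh (σ₂ * x₂) : ℝ) : ℂ))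
        (((-(1 / σ₁) * Real.exp (σ₂ * x₂) * (Real.cosh (σ₁ * x₁) * (σ₁ * 1)) : ℝ) : ℂ)
          + Complex.I * ((1 / σ₂ * (Real.exp (σ₁ * x₁) * (σ₁ * 1)) * Real.sinh (σ₂ * x₂) : ℝ) : ℂ)) x₁ := by
      have h1 : HasDerivAt (fun t : ℝ => σ₁ * t) (σ₁ * 1) x₁ := (hasDerivAt_id x₁).const_mul σ₁
      have hu : HasDerivAt
          (fun t : ℝ => -(1 / σ₁) * Real.exp (σ₂ * x₂) * Real.sinh (σ₁ * t))
          (-(1 / σ₁) * Real.exp (σ₂ * x₂) * (Real.cosh (σ₁ * x₁) * (σ₁ * 1))) x₁ :=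
        h1.sinh.const_mul _
      have hv : HasDerivAt
          (fun t : ℝ => 1 / σ₂ * Real.exp (σ₁ * t) * Real.sinh (σ₂ * x₂))
          (1 / σ₂ * (Real.exp (σ₁ * x₁) * (σ₁ * 1)) * Real.sinh (σ₂ * x₂)) x₁ := by
        exact (h1.exp.const_mul (1 / σ₂)).mul_const _
      exact hu.ofReal_comp.add (hv.ofReal_comp.const_mul Complex.I)
    rw [dzetabar]
    simp only []
    rw [hd2.deriv, hd1.deriv]
    simp only [Complex.ext_iff, Complex.sub_re, Complex.sub_im, Complex.add_re, Complex.add_im,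
      Complex.mul_re, Complex.mul_im, Complex.I_re, Complex.I_im, Complex.ofReal_re,
      Complex.ofReal_im, Complex.zero_re, Complex.zero_im, map_sub, map_mul, Complex.conj_re,
      Complex.conj_im]
    simp only [Real.sinh_eq, Real.cosh_eq, Real.exp_neg]
    constructor <;> field_simp <;> ring
  · -- the limit
    have h1 : HasFDerivAt (fun p : ℝ × ℝ => σ₁ * p.1)
        (σ₁ • ContinuousLinearMap.fst ℝ ℝ ℝ) ((0, 0) : ℝ × ℝ) :=
      (hasFDerivAt_fst).const_mul σ₁
    have h2 : HasFDerivAt (fun p : ℝ × ℝ => σ₂ * p.2)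
        (σ₂ • ContinuousLinearMap.snd ℝ ℝ ℝ) ((0, 0) : ℝ × ℝ) :=
      (hasFDerivAt_snd).const_mul σ₂
    have hS1 : HasFDerivAt (fun p : ℝ × ℝ => Real.sinh (σ₁ * p.1))
        (Real.cosh (σ₁ * 0) • (σ₁ • ContinuousLinearMap.fst ℝ ℝ ℝ)) ((0, 0) : ℝ × ℝ) :=
      (Real.hasDerivAt_sinh (σ₁ * 0)).comp_hasFDerivAt (f := fun p : ℝ × ℝ => σ₁ * p.1) ((0, 0) : ℝ × ℝ) h1
    have hS2 : HasFDerivAt (fun p : ℝ × ℝ => Real.sinh (σ₂ * p.2))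
        (Real.cosh (σ₂ * 0) • (σ₂ • ContinuousLinearMap.snd ℝ ℝ ℝ)) ((0, 0) : ℝ × ℝ) :=
      (Real.hasDerivAt_sinh (σ₂ * 0)).comp_hasFDerivAt (f := fun p : ℝ × ℝ => σ₂ * p.2) ((0, 0) : ℝ × ℝ) h2
    have hE1 : HasFDerivAt (fun p : ℝ × ℝ => Real.exp (σ₁ * p.1))
        (Real.exp (σ₁ * 0) • (σ₁ • ContinuousLinearMap.fst ℝ ℝ ℝ)) ((0, 0) : ℝ × ℝ) :=
      (Real.hasDerivAt_exp (σ₁ * 0)).comp_hasFDerivAt (f := fun p : ℝ × ℝ => σ₁ * p.1) ((0, 0) : ℝ × ℝ) h1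
    have hE2 : HasFDerivAt (fun p : ℝ × ℝ => Real.exp (σ₂ * p.2))
        (Real.exp (σ₂ * 0) • (σ₂ • ContinuousLinearMap.snd ℝ ℝ ℝ)) ((0, 0) : ℝ × ℝ) :=
      (Real.hasDerivAt_exp (σ₂ * 0)).comp_hasFDerivAt (f := fun p : ℝ × ℝ => σ₂ * p.2) ((0, 0) : ℝ × ℝ) h2
    have hu := (hE2.const_mul (-(1 / σ₁))).mul hS1
    have hv := (hE1.const_mul (1 / σ₂)).mul hS2
    have hgD := (Complex.ofRealCLM.hasFDerivAt.comp ((0, 0) : ℝ × ℝ) hu).add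
      ((Complex.ofRealCLM.hasFDerivAt.comp ((0, 0) : ℝ × ℝ) hv).const_mul Complex.I)
    set L : ℝ × ℝ →L[ℝ] ℂ :=
      Complex.I • Complex.ofRealCLM.comp (ContinuousLinearMap.snd ℝ ℝ ℝ)
        - Complex.ofRealCLM.comp (ContinuousLinearMap.fst ℝ ℝ ℝ) with hLdef
    have hg : HasFDerivAt (fun p : ℝ × ℝ =>
        ((-(1 / σ₁) * Real.exp (σ₂ * p.2) * Real.sinh (σ₁ * p.1) : ℝ) : ℂ)
          + Complex.I * ((1 / σ₂ * Real.exp (σ₁ * p.1) * Real.sinh (σ₂ * p.2) : ℝ) : ℂ))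
        L ((0, 0) : ℝ × ℝ) := by
      refine hgD.congr_fderiv (ContinuousLinearMap.ext fun q => ?_)
      simp only [hLdef, ContinuousLinearMap.add_apply, ContinuousLinearMap.sub_apply,
        ContinuousLinearMap.smul_apply, ContinuousLinearMap.comp_apply,
        ContinuousLinearMap.coe_fst', ContinuousLinearMap.coe_snd',
        Complex.ofRealCLM_apply, mul_zero, Real.exp_zero, Real.sinh_zero, Real.cosh_zero,
        smul_eq_mul, Complex.real_smul, Complex.ofReal_mul, Complex.ofReal_add,
        Complex.ofReal_zero, Complex.ofReal_one, Complex.ofReal_neg, Complex.ofReal_div]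
      field_simp [Complex.ofReal_ne_zero.mpr hσ₁, Complex.ofReal_ne_zero.mpr hσ₂]
      ring
    rw [hasFDerivAt_iff_tendsto] at hg
    have hg2 : Filter.Tendsto (fun p : ℝ × ℝ => ‖p‖⁻¹ *
        ‖(((-(1 / σ₁) * Real.exp (σ₂ * p.2) * Real.sinh (σ₁ * p.1) : ℝ) : ℂ)
          + Complex.I * ((1 / σ₂ * Real.exp (σ₁ * p.1) * Real.sinh (σ₂ * p.2) : ℝ) : ℂ)) - L p‖)
        (nhds ((0, 0) : ℝ × ℝ)) (nhds 0) := by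
      rw [show ((0, 0) : ℝ × ℝ) = 0 from rfl] at hg
      simp only [sub_zero, Prod.fst_zero, Prod.snd_zero, mul_zero, Real.sinh_zero,
        Complex.ofReal_zero, add_zero, zero_add] at hg
      exact hg
    rw [tendsto_iff_norm_sub_tendsto_zero]
    refine squeeze_zero' (Filter.Eventually.of_forall fun q => norm_nonneg _) ?_
      (hg2.mono_left nhdsWithin_le_nhds)
    filter_upwards [self_mem_nhdsWithin] with q hq
    have hqne : q ≠ 0 := fun h => hq (by rw [h]; exact Set.mem_singleton_iff.mpr rfl)
    have hq0 : (0 : ℝ) < ‖q‖ := norm_pos_iff.mpr hqne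
    have hζ : ((q.2 : ℂ) + Complex.I * (q.1 : ℂ)) ≠ 0 := by
      intro h
      apply hqne
      have hre := congrArg Complex.re h
      have him := congrArg Complex.im h
      simp at hre him
      exact Prod.ext him hre
    have hLq : L q = Complex.I * ((q.2 : ℂ) + Complex.I * (q.1 : ℂ)) := by
      simp only [hLdef, ContinuousLinearMap.sub_apply, ContinuousLinearMap.smul_apply,
        ContinuousLinearMap.comp_apply, ContinuousLinearMap.coe_fst',
        ContinuousLinearMap.coe_snd', Complex.ofRealCLM_apply, smul_eq_mul]
      rw [mul_add, ← mul_assoc, Complex.I_mul_I]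
      ring
    have hζge : ‖q‖ ≤ ‖(q.2 : ℂ) + Complex.I * (q.1 : ℂ)‖ := by
      rw [Prod.norm_def]
      refine max_le ?_ ?_
      · have := Complex.abs_im_le_norm ((q.2 : ℂ) + Complex.I * (q.1 : ℂ))
        simpa using this
      · have := Complex.abs_re_le_norm ((q.2 : ℂ) + Complex.I * (q.1 : ℂ))
        simpa using this
    have key : (((-(1 / σ₁) * Real.exp (σ₂ * q.2) * Real.sinh (σ₁ * q.1) : ℝ) : ℂ)
          + Complex.I * ((1 / σ₂ * Real.exp (σ₁ * q.1) * Real.sinh (σ₂ * q.2) : ℝ) : ℂ))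
            / ((q.2 : ℂ) + Complex.I * (q.1 : ℂ)) - Complex.I
        = ((((-(1 / σ₁) * Real.exp (σ₂ * q.2) * Real.sinh (σ₁ * q.1) : ℝ) : ℂ)
          + Complex.I * ((1 / σ₂ * Real.exp (σ₁ * q.1) * Real.sinh (σ₂ * q.2) : ℝ) : ℂ)) - L q)
            / ((q.2 : ℂ) + Complex.I * (q.1 : ℂ)) := by
      rw [hLq]
      field_simp
    rw [key, norm_div, div_eq_inv_mul]
    exact mul_le_mul_of_nonneg_right (inv_anti₀ hq0 hζge) (norm_nonneg _)
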